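/- For every 0 < α ≤ 1, the function f_α(y) = (α/(π|y|)) ∫_0^1 sin(t|y|) t^{α−1} dt (for y ≠ 0) is nonnegative almost everywhere, satisfies ∫_ℝ f_α(y) dy = 1, and the probability measure μ_α on ℝ with density f_α has characteristic function ∫_ℝ e^{ity} f_α(y) dy = (1 − |t|^α)_+ for all t ∈ ℝ, where (u)_+ = max(u,0). -/

import Mathlib

open MeasureTheory Set Real

set_option maxHeartbeats 1000000

namespace KendallAux

noncomputable def Ia (α z : ℝ) : ℝ := ∫ t in (0:ℝ)..1, Real.sin (t * z) * t ^ (α - 1)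
noncomputable def Ja (α z : ℝ) : ℝ := ∫ t in (0:ℝ)..1, (1 - Real.cos (t * z)) * t ^ (α - 2)

/-- interval integrability from an rpow bound on (0,1]. -/
lemma II_of_bound {f : ℝ → ℝ} {c r : ℝ} (hr : -1 < r)
    (hm : AEStronglyMeasurable f (volume.restrict (Ioc (0:ℝ) 1)))
    (hb : ∀ t ∈ Ioc (0:ℝ) 1, |f t| ≤ c * t ^ r) :
    IntervalIntegrable f volume 0 1 := by
  rw [intervalIntegrable_iff_integrableOn_Ioc_of_le zero_le_one]
  have hg : IntegrableOn (fun t : ℝ => c * t ^ r) (Ioc (0:ℝ) 1) := by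
    have := (intervalIntegral.intervalIntegrable_rpow' (a := 0) (b := 1) hr).const_mul c
    rwa [intervalIntegrable_iff_integrableOn_Ioc_of_le zero_le_one] at this
  refine Integrable.mono hg hm ?_
  refine (ae_restrict_iff' measurableSet_Ioc).mpr (Filter.Eventually.of_forall fun t ht => ?_)
  rw [Real.norm_eq_abs, Real.norm_eq_abs]
  exact (hb t ht).trans (le_abs_self _)

variable {α : ℝ}

lemma one_sub_cos_le_sq (x : ℝ) : 1 - Real.cos x ≤ x ^ 2 / 2 := by
  nlinarith [Real.one_sub_sq_div_two_le_cos (x := x)]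

lemma one_sub_cos_nonneg (x : ℝ) : 0 ≤ 1 - Real.cos x := by
  nlinarith [Real.cos_le_one x]

lemma II_sin (hα : 0 < α) (z : ℝ) :
    IntervalIntegrable (fun t => Real.sin (t * z) * t ^ (α - 1)) volume 0 1 := by
  refine II_of_bound (c := 1) (r := α - 1) (by linarith) (by measurability) fun t ht => ?_
  rw [abs_mul, abs_of_nonneg (Real.rpow_nonneg ht.1.le _), one_mul]
  have h1 : |Real.sin (t * z)| ≤ 1 := abs_sin_le_one (t * z)
  nlinarith [Real.rpow_nonneg ht.1.le (α - 1)]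

lemma II_sin' (hα : 0 < α) (z : ℝ) :
    IntervalIntegrable (fun t => t ^ (α - 1) * (Real.sin (t * z) * z)) volume 0 1 := by
  refine II_of_bound (c := |z|) (r := α - 1) (by linarith) (by measurability) fun t ht => ?_
  have h1 : |Real.sin (t * z)| ≤ 1 := abs_sin_le_one (t * z)
  rw [abs_mul, abs_mul, abs_of_nonneg (Real.rpow_nonneg ht.1.le _)]
  have h2 : 0 ≤ t ^ (α - 1) := Real.rpow_nonneg ht.1.le _
  calc t ^ (α - 1) * (|Real.sin (t * z)| * |z|) ≤ t ^ (α - 1) * (1 * |z|) := by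
        apply mul_le_mul_of_nonneg_left _ h2
        apply mul_le_mul_of_nonneg_right h1 (abs_nonneg z)
    _ = |z| * t ^ (α - 1) := by ring

lemma rpow_split (t : ℝ) (ht : 0 < t) (a : ℝ) : t ^ (a + 2) = t ^ a * t ^ 2 := by
  rw [← Real.rpow_natCast t 2, ← Real.rpow_add ht]
  norm_num

lemma II_cos_sing (hα : 0 < α) (c z : ℝ) :
    IntervalIntegrable (fun t => c * t ^ (α - 2) * (1 - Real.cos (t * z))) volume 0 1 := by
  refine II_of_bound (c := |c| * z ^ 2 / 2) (r := α) (by linarith) (by measurability)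
    fun t ht => ?_
  have h2 : 0 ≤ t ^ (α - 2) := Real.rpow_nonneg ht.1.le _
  have h3 : 1 - Real.cos (t * z) ≤ (t * z) ^ 2 / 2 := one_sub_cos_le_sq _
  have h4 : 0 ≤ 1 - Real.cos (t * z) := one_sub_cos_nonneg _
  rw [abs_mul, abs_mul, abs_of_nonneg h2, abs_of_nonneg h4]
  have h5 : t ^ (α - 2) * ((t * z) ^ 2 / 2) = t ^ α * z ^ 2 / 2 := by
    have : t ^ α = t ^ (α - 2) * t ^ 2 := by
      have := rpow_split t ht.1 (α - 2); rw [sub_add_cancel] at this; exact this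
    rw [this]; ring
  calc |c| * t ^ (α - 2) * (1 - Real.cos (t * z)) ≤ |c| * (t ^ (α - 2) * ((t * z) ^ 2 / 2)) := by
        rw [mul_assoc]
        refine mul_le_mul_of_nonneg_left ?_ (abs_nonneg c)
        exact mul_le_mul_of_nonneg_left h3 h2
    _ = |c| * z ^ 2 / 2 * t ^ α := by rw [h5]; ring

/-- Integration by parts identity A : `∫₀¹ (1-t^α) cos (tz) dt = (α/z) Ia α z`. -/
lemma key_cos (hα : 0 < α) {z : ℝ} (hz : z ≠ 0) :
    ∫ t in (0:ℝ)..1, (1 - t ^ α) * Real.cos (t * z) = (α / z) * Ia α z := by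
  have hz' : (0:ℝ) < |z| := abs_pos.mpr hz
  have hcont1 : Continuous fun t : ℝ => 1 - t ^ α :=
    continuous_const.sub (continuous_id.rpow_const fun x => Or.inr hα.le)
  have hint1 : IntervalIntegrable (fun t => (1 - t ^ α) * Real.cos (t * z)) volume 0 1 :=
    (hcont1.mul (Real.continuous_cos.comp (continuous_id.mul continuous_const))).intervalIntegrable 0 1
  have hint2 : IntervalIntegrable (fun t => α * t ^ (α - 1) * (Real.sin (t * z) / z)) volume 0 1 := by
    refine II_of_bound (c := α / |z|) (r := α - 1) (by linarith) (by measurability) fun t ht => ?_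
    have h2 : 0 ≤ t ^ (α - 1) := Real.rpow_nonneg ht.1.le _
    have h1 : |Real.sin (t * z)| ≤ 1 := abs_sin_le_one (t * z)
    rw [abs_mul, abs_mul, abs_div, abs_of_nonneg h2, abs_of_nonneg hα.le]
    calc α * t ^ (α - 1) * (|Real.sin (t * z)| / |z|)
        ≤ α * t ^ (α - 1) * (1 / |z|) := by gcongr
      _ = α / |z| * t ^ (α - 1) := by ring
  have hd : ∀ t ∈ Ioo (0:ℝ) 1,
      HasDerivWithinAt (fun t : ℝ => (1 - t ^ α) * (Real.sin (t * z) / z))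
        ((1 - t ^ α) * Real.cos (t * z) - α * t ^ (α - 1) * (Real.sin (t * z) / z)) (Ioi t) t := by
    intro t ht
    have h1 : HasDerivAt (fun t : ℝ => 1 - t ^ α) (-(α * t ^ (α - 1))) t :=
      (Real.hasDerivAt_rpow_const (p := α) (Or.inl ht.1.ne')).const_sub 1
    have h2 : HasDerivAt (fun t : ℝ => Real.sin (t * z) / z) (Real.cos (t * z) * z / z) t :=
      ((hasDerivAt_mul_const z).sin).div_const z
    have h3 := h1.mul h2
    have h4 : -(α * t ^ (α - 1)) * (Real.sin (t * z) / z)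
        + (1 - t ^ α) * (Real.cos (t * z) * z / z) =
        (1 - t ^ α) * Real.cos (t * z) - α * t ^ (α - 1) * (Real.sin (t * z) / z) := by
      field_simp
      ring
    rw [h4] at h3
    exact h3.hasDerivWithinAt
  have hcontphi : ContinuousOn (fun t : ℝ => (1 - t ^ α) * (Real.sin (t * z) / z)) (Icc 0 1) :=
    (hcont1.mul ((Real.continuous_sin.comp (continuous_id.mul continuous_const)).div_const z)).continuousOn
  have h0 :
      ∫ t in (0:ℝ)..1,
        ((1 - t ^ α) * Real.cos (t * z) - α * t ^ (α - 1) * (Real.sin (t * z) / z))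
      = (fun t : ℝ => (1 - t ^ α) * (Real.sin (t * z) / z)) 1
        - (fun t : ℝ => (1 - t ^ α) * (Real.sin (t * z) / z)) 0 :=
    intervalIntegral.integral_eq_sub_of_hasDeriv_right_of_le zero_le_one hcontphi hd
      (hint1.sub hint2)
  simp only [Real.one_rpow, sub_self, zero_mul, one_mul, zero_div, mul_zero,
    Real.sin_zero, sub_zero] at h0
  have hsplit : ∫ t in (0:ℝ)..1,
      ((1 - t ^ α) * Real.cos (t * z) - α * t ^ (α - 1) * (Real.sin (t * z) / z))
      = (∫ t in (0:ℝ)..1, (1 - t ^ α) * Real.cos (t * z))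
        - ∫ t in (0:ℝ)..1, α * t ^ (α - 1) * (Real.sin (t * z) / z) :=
    intervalIntegral.integral_sub hint1 hint2
  have hval : ∫ t in (0:ℝ)..1, α * t ^ (α - 1) * (Real.sin (t * z) / z)
      = (α / z) * Ia α z := by
    rw [Ia, ← intervalIntegral.integral_const_mul]
    apply intervalIntegral.integral_congr
    intro t _
    field_simp
  rw [hsplit, hval] at h0
  linarith


/-- Integration by parts identity B : `z * Ia α z = (1 - cos z) + (1-α) * Ja α z`. -/
lemma key_IJ (hα : 0 < α) (hα1 : α ≤ 1) (z : ℝ) :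
    z * Ia α z = (1 - Real.cos z) + (1 - α) * Ja α z := by
  have hint1 : IntervalIntegrable
      (fun t => (α - 1) * t ^ (α - 2) * (1 - Real.cos (t * z))) volume 0 1 :=
    II_cos_sing hα (α - 1) z
  have hint2 : IntervalIntegrable (fun t => t ^ (α - 1) * (Real.sin (t * z) * z)) volume 0 1 :=
    II_sin' hα z
  have hd : ∀ t ∈ Ioo (0:ℝ) 1,
      HasDerivWithinAt (fun t : ℝ => t ^ (α - 1) * (1 - Real.cos (t * z)))
        ((α - 1) * t ^ (α - 2) * (1 - Real.cos (t * z))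
          + t ^ (α - 1) * (Real.sin (t * z) * z)) (Ioi t) t := by
    intro t ht
    have h1 : HasDerivAt (fun t : ℝ => t ^ (α - 1)) ((α - 1) * t ^ (α - 2)) t := by
      have := Real.hasDerivAt_rpow_const (x := t) (p := α - 1) (Or.inl ht.1.ne')
      rwa [show α - 1 - 1 = α - 2 by ring] at this
    have h2 : HasDerivAt (fun t : ℝ => 1 - Real.cos (t * z)) (Real.sin (t * z) * z) t := by
      have := ((hasDerivAt_mul_const (x := t) z).cos).const_sub 1
      simpa using this
    exact (h1.mul h2).hasDerivWithinAt
  have hcontpsi : ContinuousOn (fun t : ℝ => t ^ (α - 1) * (1 - Real.cos (t * z))) (Icc 0 1) := by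
    intro t ht
    rcases eq_or_lt_of_le ht.1 with h0 | h0
    · -- continuity at 0 by squeeze
      have hval : (0:ℝ) ^ (α - 1) * (1 - Real.cos (0 * z)) = 0 := by
        simp
      rw [ContinuousWithinAt, ← h0, hval]
      have hb : ∀ s ∈ Icc (0:ℝ) 1, s ^ (α - 1) * (1 - Real.cos (s * z)) ≤ z ^ 2 / 2 * s ^ (α + 1) := by
        intro s hs
        rcases eq_or_lt_of_le hs.1 with hs0 | hs0
        · rw [← hs0]
          simp only [Real.cos_zero, zero_mul, sub_self, mul_zero]
          positivity
        · have h3 : 1 - Real.cos (s * z) ≤ (s * z) ^ 2 / 2 := one_sub_cos_le_sq _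
          have h5 : s ^ (α - 1) * ((s * z) ^ 2 / 2) = z ^ 2 / 2 * s ^ (α + 1) := by
            have h6 : s ^ (α + 1) = s ^ (α - 1) * s ^ 2 := by
              have := rpow_split s hs0 (α - 1); rw [show α - 1 + 2 = α + 1 by ring] at this
              exact this
            rw [h6]; ring
          have h7 : 0 ≤ s ^ (α - 1) := Real.rpow_nonneg hs.1 _
          nlinarith
      have hnn : ∀ s ∈ Icc (0:ℝ) 1, 0 ≤ s ^ (α - 1) * (1 - Real.cos (s * z)) := fun s hs =>
        mul_nonneg (Real.rpow_nonneg hs.1 _) (one_sub_cos_nonneg _)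
      have htend : Filter.Tendsto (fun s : ℝ => z ^ 2 / 2 * s ^ (α + 1))
          (nhdsWithin 0 (Icc 0 1)) (nhds 0) := by
        have hc : ContinuousAt (fun s : ℝ => s ^ (α + 1)) 0 :=
          Real.continuousAt_rpow_const 0 (α + 1) (Or.inr (by linarith))
        have h0' : (0:ℝ) ^ (α + 1) = 0 := Real.zero_rpow (by linarith)
        have h8 : Filter.Tendsto (fun s : ℝ => s ^ (α + 1)) (nhdsWithin 0 (Icc 0 1)) (nhds ((0:ℝ) ^ (α + 1))) :=
          hc.tendsto.mono_left nhdsWithin_le_nhds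
        have h9 := h8.const_mul (z ^ 2 / 2)
        rw [h0', mul_zero] at h9
        exact h9
      refine squeeze_zero' ?_ ?_ htend
      · exact Filter.eventually_of_mem self_mem_nhdsWithin hnn
      · exact Filter.eventually_of_mem self_mem_nhdsWithin hb
    · -- continuity away from 0
      have : ContinuousAt (fun t : ℝ => t ^ (α - 1) * (1 - Real.cos (t * z))) t := by
        refine ContinuousAt.mul ?_ ?_
        · exact Real.continuousAt_rpow_const t (α - 1) (Or.inl h0.ne')
        · exact (continuous_const.sub
            (Real.continuous_cos.comp (continuous_id.mul continuous_const))).continuousAt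
      exact this.continuousWithinAt
  have h0 :
      ∫ t in (0:ℝ)..1,
        ((α - 1) * t ^ (α - 2) * (1 - Real.cos (t * z))
          + t ^ (α - 1) * (Real.sin (t * z) * z))
      = (fun t : ℝ => t ^ (α - 1) * (1 - Real.cos (t * z))) 1
        - (fun t : ℝ => t ^ (α - 1) * (1 - Real.cos (t * z))) 0 :=
    intervalIntegral.integral_eq_sub_of_hasDeriv_right_of_le zero_le_one hcontpsi hd
      (hint1.add hint2)
  simp only [Real.one_rpow, one_mul, zero_mul, Real.cos_zero, sub_self, mul_zero,
    sub_zero] at h0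
  have hsplit : ∫ t in (0:ℝ)..1,
      ((α - 1) * t ^ (α - 2) * (1 - Real.cos (t * z))
        + t ^ (α - 1) * (Real.sin (t * z) * z))
      = (∫ t in (0:ℝ)..1, (α - 1) * t ^ (α - 2) * (1 - Real.cos (t * z)))
        + ∫ t in (0:ℝ)..1, t ^ (α - 1) * (Real.sin (t * z) * z) :=
    intervalIntegral.integral_add hint1 hint2
  have hval1 : ∫ t in (0:ℝ)..1, (α - 1) * t ^ (α - 2) * (1 - Real.cos (t * z))
      = (α - 1) * Ja α z := by
    rw [Ja, ← intervalIntegral.integral_const_mul]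
    apply intervalIntegral.integral_congr
    intro t _
    ring
  have hval2 : ∫ t in (0:ℝ)..1, t ^ (α - 1) * (Real.sin (t * z) * z) = z * Ia α z := by
    rw [Ia, ← intervalIntegral.integral_const_mul]
    apply intervalIntegral.integral_congr
    intro t _
    ring
  rw [hsplit, hval1, hval2] at h0
  linarith

lemma Ja_nonneg (z : ℝ) : 0 ≤ Ja α z := by
  refine intervalIntegral.integral_nonneg zero_le_one fun t ht => ?_
  exact mul_nonneg (one_sub_cos_nonneg _) (Real.rpow_nonneg ht.1 _)

lemma Ia_nonneg (hα : 0 < α) (hα1 : α ≤ 1) {z : ℝ} (hz : 0 ≤ z) : 0 ≤ Ia α z := by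
  rcases eq_or_lt_of_le hz with h0 | h0
  · have : Ia α 0 = 0 := by
      rw [Ia]
      simp
    rw [← h0, this]
  · have h1 := key_IJ hα hα1 z
    have h2 := Ja_nonneg (α := α) z
    have h3 := one_sub_cos_nonneg z
    nlinarith

lemma one_sub_cos_le_two_rpow {x β : ℝ} (hx : 0 ≤ x) (hβ0 : 0 ≤ β) (hβ1 : β ≤ 1) :
    1 - Real.cos x ≤ 2 * x ^ β := by
  rcases eq_or_lt_of_le hx with h | h
  · rw [← h]
    simp only [Real.cos_zero, sub_self]
    positivity
  rcases le_or_gt x 1 with h1 | h1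
  · have h2 : x ^ (2:ℝ) ≤ x ^ β := Real.rpow_le_rpow_of_exponent_ge h h1 (by linarith)
    have h3 : x ^ (2:ℝ) = x ^ 2 := by
      rw [← Real.rpow_natCast x 2]; norm_num
    have h4 := one_sub_cos_le_sq x
    rw [h3] at h2
    nlinarith [Real.rpow_nonneg hx β]
  · have h2 : (1:ℝ) ≤ x ^ β := Real.one_le_rpow h1.le hβ0
    nlinarith [Real.neg_one_le_cos x]

lemma II_Ja (hα : 0 < α) (z : ℝ) :
    IntervalIntegrable (fun t => (1 - Real.cos (t * z)) * t ^ (α - 2)) volume 0 1 := by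
  have := II_cos_sing hα 1 z
  simp only [one_mul] at this
  refine this.congr_ae (Filter.Eventually.of_forall fun t => ?_)
  ring

lemma Ja_bound (hα : 0 < α) (hα1 : α ≤ 1) {z : ℝ} (hz : 1 ≤ z) :
    Ja α z ≤ 4 / α * z ^ (1 - α / 2) := by
  have hz0 : (0:ℝ) < z := by linarith
  have hβ0 : (0:ℝ) ≤ 1 - α / 2 := by linarith
  have hβ1 : 1 - α / 2 ≤ 1 := by linarith
  have hrint : IntervalIntegrable (fun t : ℝ => t ^ (α / 2 - 1)) volume 0 1 :=
    intervalIntegral.intervalIntegrable_rpow' (by linarith)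
  have hβint : IntervalIntegrable
      (fun t : ℝ => 2 * z ^ (1 - α / 2) * t ^ (α / 2 - 1)) volume 0 1 :=
    hrint.const_mul _
  have hmono : Ja α z ≤ ∫ t in (0:ℝ)..1, 2 * z ^ (1 - α / 2) * t ^ (α / 2 - 1) := by
    rw [Ja]
    refine intervalIntegral.integral_mono_on zero_le_one (II_Ja hα z) hβint fun t ht => ?_
    rcases eq_or_lt_of_le ht.1 with ht0 | ht0
    · rw [← ht0]
      simp only [zero_mul, Real.cos_zero, sub_self]
      positivity
    · have h1 : 1 - Real.cos (t * z) ≤ 2 * (t * z) ^ (1 - α / 2) :=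
        one_sub_cos_le_two_rpow (by positivity) hβ0 hβ1
      have h2 : 0 ≤ t ^ (α - 2) := Real.rpow_nonneg ht.1 _
      have h3 : (t * z) ^ (1 - α / 2) * t ^ (α - 2) = z ^ (1 - α / 2) * t ^ (α / 2 - 1) := by
        rw [Real.mul_rpow ht0.le hz0.le, mul_comm (t ^ (1 - α / 2)), mul_assoc,
          ← Real.rpow_add ht0]
        ring_nf
      calc (1 - Real.cos (t * z)) * t ^ (α - 2)
          ≤ 2 * (t * z) ^ (1 - α / 2) * t ^ (α - 2) := by
            exact mul_le_mul_of_nonneg_right h1 h2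
        _ = 2 * z ^ (1 - α / 2) * t ^ (α / 2 - 1) := by
            rw [mul_assoc, h3]; ring
  have hval : ∫ t in (0:ℝ)..1, 2 * z ^ (1 - α / 2) * t ^ (α / 2 - 1)
      = 4 / α * z ^ (1 - α / 2) := by
    rw [intervalIntegral.integral_const_mul, integral_rpow (Or.inl (by linarith))]
    rw [show α / 2 - 1 + 1 = α / 2 by ring, Real.one_rpow,
      Real.zero_rpow (by positivity : α / 2 ≠ 0)]
    field_simp
    ring
  rw [hval] at hmono
  exact hmono

lemma Ia_bound (hα : 0 < α) (hα1 : α ≤ 1) {z : ℝ} (hz : 1 ≤ z) :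
    Ia α z ≤ (2 + 4 / α) * z ^ (-(α / 2)) := by
  have hz0 : (0:ℝ) < z := by linarith
  have hβ0 : (0:ℝ) ≤ 1 - α / 2 := by linarith
  have h1 := key_IJ hα hα1 z
  have h2 := Ja_bound hα hα1 hz
  have h3 := Ja_nonneg (α := α) z
  have hzβ : (1:ℝ) ≤ z ^ (1 - α / 2) := Real.one_le_rpow hz hβ0
  have h4 : z * Ia α z ≤ (2 + 4 / α) * z ^ (1 - α / 2) := by
    have hJ : (1 - α) * Ja α z ≤ 4 / α * z ^ (1 - α / 2) := by
      calc (1 - α) * Ja α z ≤ 1 * Ja α z := by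
            apply mul_le_mul_of_nonneg_right _ h3
            linarith
        _ = Ja α z := one_mul _
        _ ≤ 4 / α * z ^ (1 - α / 2) := h2
    have hcos : 1 - Real.cos z ≤ 2 * z ^ (1 - α / 2) := by
      nlinarith [Real.neg_one_le_cos z]
    rw [h1]
    nlinarith
  have h5 : Ia α z ≤ (2 + 4 / α) * z ^ (1 - α / 2) / z := by
    rw [le_div_iff₀ hz0]
    nlinarith
  have h6 : (2 + 4 / α) * z ^ (1 - α / 2) / z = (2 + 4 / α) * z ^ (-(α / 2)) := by
    rw [mul_div_assoc, ← Real.rpow_sub_one hz0.ne', show 1 - α / 2 - 1 = -(α / 2) by ring]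
  rw [h6] at h5
  exact h5

open scoped FourierTransform

noncomputable def gm (α t : ℝ) : ℝ := max (1 - |t| ^ α) 0

noncomputable def G (α : ℝ) : ℝ → ℂ := fun t => ((gm α t : ℝ) : ℂ)

lemma gm_cont (hα : 0 < α) : Continuous (gm α) :=
  (continuous_const.sub (continuous_abs.rpow_const fun _ => Or.inr hα.le)).max continuous_const

lemma gm_supp (hα : 0 < α) : HasCompactSupport (gm α) := by
  refine HasCompactSupport.intro (isCompact_Icc (a := (-1:ℝ)) (b := 1)) fun x hx => ?_
  have h1 : 1 < |x| := by
    rcases lt_or_ge 1 |x| with h | h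
    · exact h
    · exfalso; exact hx (abs_le.mp h)
  have h2 : (1:ℝ) ≤ |x| ^ α := Real.one_le_rpow h1.le hα.le
  exact max_eq_right (by linarith)

lemma G_cont (hα : 0 < α) : Continuous (G α) := Complex.continuous_ofReal.comp (gm_cont hα)

lemma G_supp (hα : 0 < α) : HasCompactSupport (G α) := by
  have := (gm_supp hα)
  rw [HasCompactSupport, tsupport] at this ⊢
  refine IsCompact.of_isClosed_subset this isClosed_closure (closure_mono ?_)
  intro x hx
  simp only [Function.mem_support, G, ne_eq, Complex.ofReal_eq_zero] at hx ⊢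
  exact hx

lemma G_int (hα : 0 < α) : Integrable (G α) := (G_cont hα).integrable_of_hasCompactSupport (G_supp hα)

lemma gm_eq_on_unit (hα : 0 < α) {t : ℝ} (h0 : 0 ≤ t) (h1 : t ≤ 1) :
    gm α t = 1 - t ^ α := by
  rw [gm, abs_of_nonneg h0]
  exact max_eq_left (by nlinarith [Real.rpow_le_one h0 h1 hα.le])

/-- The Fourier transform of `G α` at `y ≠ 0`. -/
lemma FG_eq (hα : 0 < α) {y : ℝ} (hy : y ≠ 0) :
    𝓕 (G α) y = ((α / (π * |y|) * Ia α (2 * π * |y|) : ℝ) : ℂ) := by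
  have hy' : 0 < |y| := abs_pos.mpr hy
  set z : ℝ := 2 * π * |y| with hzdef
  have hz : 0 < z := by positivity
  -- the two real integrands
  set u : ℝ → ℝ := fun v => Real.cos (v * z) * gm α v with hu
  set w : ℝ → ℝ := fun v => Real.sin (-2 * π * v * y) * gm α v with hw
  have hu_cont : Continuous u := (Real.continuous_cos.comp (continuous_id.mul continuous_const)).mul (gm_cont hα)
  have hw_cont : Continuous w :=
    (Real.continuous_sin.comp ((continuous_const.mul continuous_id).mul continuous_const)).mul (gm_cont hα)
  have hu_supp : HasCompactSupport u := (gm_supp hα).mul_left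
  have hw_supp : HasCompactSupport w := (gm_supp hα).mul_left
  have hu_int : Integrable u := hu_cont.integrable_of_hasCompactSupport hu_supp
  have hw_int : Integrable w := hw_cont.integrable_of_hasCompactSupport hw_supp
  have hcos : ∀ v : ℝ, Real.cos (-2 * π * v * y) = Real.cos (v * z) := by
    intro v
    rw [← Real.cos_abs (-2 * π * v * y), ← Real.cos_abs (v * z)]
    congr 1
    rw [hzdef]
    rw [show -2 * π * v * y = (-2) * (π * (v * y)) by ring,
      show v * (2 * π * |y|) = 2 * (π * (v * |y|)) by ring]
    simp only [abs_mul, abs_abs]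
    norm_num
  have hstep : 𝓕 (G α) y = ∫ v : ℝ, (((u v : ℝ) : ℂ) + ((w v : ℝ) : ℂ) * Complex.I) := by
    rw [Real.fourier_real_eq_integral_exp_smul]
    congr 1
    ext v
    rw [smul_eq_mul, Complex.exp_mul_I]
    rw [show ((-2 * π * v * y : ℝ) : ℂ) = ((-2 * π * v * y : ℝ) : ℂ) from rfl]
    rw [← Complex.ofReal_cos, ← Complex.ofReal_sin]
    rw [hcos v]
    simp only [G, hu, hw]
    push_cast
    ring
  have hsplit : ∫ v : ℝ, (((u v : ℝ) : ℂ) + ((w v : ℝ) : ℂ) * Complex.I)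
      = ((∫ v : ℝ, u v : ℝ) : ℂ) + ((∫ v : ℝ, w v : ℝ) : ℂ) * Complex.I := by
    have h1 : Integrable (fun v : ℝ => ((u v : ℝ) : ℂ)) := hu_int.ofReal
    have h2 : Integrable (fun v : ℝ => ((w v : ℝ) : ℂ) * Complex.I) := hw_int.ofReal.mul_const _
    rw [integral_add h1 h2, integral_mul_const]
    rw [show (∫ v : ℝ, ((u v : ℝ) : ℂ)) = ((∫ v : ℝ, u v : ℝ) : ℂ) from integral_ofReal,
      show (∫ v : ℝ, ((w v : ℝ) : ℂ)) = ((∫ v : ℝ, w v : ℝ) : ℂ) from integral_ofReal]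
  have hwzero : ∫ v : ℝ, w v = 0 := by
    have h1 : ∫ v : ℝ, w (-v) = ∫ v : ℝ, w v := integral_neg_eq_self w volume
    have h2 : (fun v : ℝ => w (-v)) = fun v : ℝ => -w v := by
      ext v
      simp only [hw, abs_neg, gm]
      rw [show -2 * π * (-v) * y = -(-2 * π * v * y) by ring, Real.sin_neg]
      ring
    rw [h2, integral_neg] at h1
    linarith
  have huval : ∫ v : ℝ, u v = 2 * ((α / z) * Ia α z) := by
    have habs : (fun v : ℝ => u v) = fun v : ℝ => Real.cos (|v| * z) * gm α |v| := by
      ext v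
      have h1 : Real.cos (|v| * z) = Real.cos (v * z) := by
        rw [show |v| * z = |v * z| by rw [abs_mul, abs_of_nonneg hz.le], Real.cos_abs]
      rw [hu]
      simp only [gm, abs_abs]
      rw [h1]
    rw [habs, integral_comp_abs (f := fun s => Real.cos (s * z) * gm α s)]
    have hIoi : ∫ s in Ioi (0:ℝ), Real.cos (s * z) * gm α s
        = ∫ s in Ioc (0:ℝ) 1, Real.cos (s * z) * gm α s := by
      rw [← Ioc_union_Ioi_eq_Ioi (zero_le_one (α := ℝ)),
        setIntegral_union (Ioc_disjoint_Ioi le_rfl) measurableSet_Ioi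
          (hu_cont.integrable_of_hasCompactSupport hu_supp).integrableOn
          (hu_cont.integrable_of_hasCompactSupport hu_supp).integrableOn]
      have : ∫ s in Ioi (1:ℝ), Real.cos (s * z) * gm α s = 0 := by
        rw [setIntegral_congr_fun measurableSet_Ioi (g := fun _ => (0:ℝ)) ?_]
        · simp
        · intro s hs
          have hs1 : (1:ℝ) < s := hs
          have : gm α s = 0 := by
            rw [gm, abs_of_nonneg (by linarith : (0:ℝ) ≤ s)]
            have : (1:ℝ) ≤ s ^ α := Real.one_le_rpow hs1.le hα.le
            exact max_eq_right (by linarith)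
          simp [this]
      rw [this, add_zero]
    have hIoc : ∫ s in Ioc (0:ℝ) 1, Real.cos (s * z) * gm α s
        = ∫ t in (0:ℝ)..1, (1 - t ^ α) * Real.cos (t * z) := by
      rw [intervalIntegral.integral_of_le zero_le_one]
      refine setIntegral_congr_fun measurableSet_Ioc fun s hs => ?_
      rw [gm_eq_on_unit hα hs.1.le hs.2]
      ring
    rw [hIoi, hIoc, key_cos hα hz.ne']
  rw [hstep, hsplit, hwzero, huval]
  simp only [Complex.ofReal_zero, zero_mul, add_zero]
  congr 1
  rw [hzdef]
  field_simp

lemma FG_cont (hα : 0 < α) : Continuous (𝓕 (G α)) :=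
  VectorFourier.fourierIntegral_continuous Real.continuous_fourierChar continuous_inner (G_int hα)

lemma FG_norm_bound (hα : 0 < α) (hα1 : α ≤ 1) {y : ℝ} (hy : 1 ≤ |y|) :
    ‖𝓕 (G α) y‖ ≤ (α / π * (2 + 4 / α)) * |y| ^ (-1 - α / 2) := by
  have hy0 : y ≠ 0 := by
    intro h
    rw [h, abs_zero] at hy
    linarith
  have hyp : (0:ℝ) < |y| := by linarith
  have hz1 : (1:ℝ) ≤ 2 * π * |y| := by nlinarith [Real.pi_gt_three]
  have hz0 : (0:ℝ) < 2 * π * |y| := by linarith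
  rw [FG_eq hα hy0, Complex.norm_real, Real.norm_eq_abs]
  have hIa0 : 0 ≤ Ia α (2 * π * |y|) := Ia_nonneg hα hα1 hz0.le
  have hr0 : 0 ≤ α / (π * |y|) * Ia α (2 * π * |y|) := by positivity
  rw [abs_of_nonneg hr0]
  have hstep1 : α / (π * |y|) * Ia α (2 * π * |y|)
      ≤ α / (π * |y|) * ((2 + 4 / α) * (2 * π * |y|) ^ (-(α / 2))) := by
    refine mul_le_mul_of_nonneg_left (Ia_bound hα hα1 hz1) (by positivity)
  have hstep2 : (2 * π * |y|) ^ (-(α / 2)) ≤ |y| ^ (-(α / 2)) := by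
    rw [Real.rpow_neg hz0.le, Real.rpow_neg hyp.le]
    have h7 : |y| ^ (α / 2) ≤ (2 * π * |y|) ^ (α / 2) :=
      Real.rpow_le_rpow hyp.le (by nlinarith [Real.pi_gt_three]) (by positivity)
    have h8 : 0 < |y| ^ (α / 2) := Real.rpow_pos_of_pos hyp _
    exact inv_anti₀ h8 h7
  have hstep3 : α / (π * |y|) * ((2 + 4 / α) * (2 * π * |y|) ^ (-(α / 2)))
      ≤ α / (π * |y|) * ((2 + 4 / α) * |y| ^ (-(α / 2))) := by
    refine mul_le_mul_of_nonneg_left ?_ (by positivity)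
    refine mul_le_mul_of_nonneg_left hstep2 (by positivity)
  have heq : α / (π * |y|) * ((2 + 4 / α) * |y| ^ (-(α / 2)))
      = (α / π * (2 + 4 / α)) * |y| ^ (-1 - α / 2) := by
    rw [show (-1 - α / 2 : ℝ) = -1 + -(α / 2) by ring, Real.rpow_add hyp,
      Real.rpow_neg_one]
    field_simp
  linarith

lemma FG_int (hα : 0 < α) (hα1 : α ≤ 1) : Integrable (𝓕 (G α)) := by
  have hcont := FG_cont hα
  have hp : (-1 - α / 2 : ℝ) < -1 := by linarith
  have hbInt : IntegrableOn (fun y : ℝ => (α / π * (2 + 4 / α)) * y ^ (-1 - α / 2)) (Ioi 1) :=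
    (integrableOn_Ioi_rpow_of_lt hp one_pos).const_mul _
  have hIoi : IntegrableOn (𝓕 (G α)) (Ioi 1) := by
    refine Integrable.mono' hbInt hcont.aestronglyMeasurable.restrict ?_
    refine (ae_restrict_iff' measurableSet_Ioi).mpr (Filter.Eventually.of_forall fun y hy => ?_)
    have hy1 : (1:ℝ) < y := hy
    have h1 : (1:ℝ) ≤ |y| := by rw [abs_of_pos (by linarith)]; linarith
    have := FG_norm_bound hα hα1 h1
    rwa [abs_of_pos (by linarith : (0:ℝ) < y)] at this
  have hIic : IntegrableOn (𝓕 (G α)) (Iic (-1)) := by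
    have A : MeasurableEmbedding (fun x : ℝ => -x) := (Homeomorph.neg ℝ).measurableEmbedding
    have hmap : (volume : Measure ℝ) = Measure.map (fun x : ℝ => -x) volume := by
      simp [Measure.map_neg_eq_self]
    have key : IntegrableOn (𝓕 (G α)) (Iic (-1)) (Measure.map (fun x : ℝ => -x) volume) := by
      rw [A.integrableOn_map_iff]
      have hpre : (fun x : ℝ => -x) ⁻¹' Iic (-1) = Ici 1 := by
        ext x
        simp only [mem_preimage, mem_Iic, mem_Ici]
        constructor <;> intro h <;> linarith
      rw [hpre, integrableOn_Ici_iff_integrableOn_Ioi]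
      refine Integrable.mono' hbInt ((hcont.comp continuous_neg).aestronglyMeasurable.restrict) ?_
      refine (ae_restrict_iff' measurableSet_Ioi).mpr (Filter.Eventually.of_forall fun y hy => ?_)
      have hy1 : (1:ℝ) < y := hy
      have h1 : (1:ℝ) ≤ |(-y)| := by rw [abs_neg, abs_of_pos (by linarith)]; linarith
      have hb := FG_norm_bound hα hα1 h1
      rw [abs_neg, abs_of_pos (by linarith : (0:ℝ) < y)] at hb
      exact hb
    rwa [← hmap] at key
  have hunion : Iic (-1:ℝ) ∪ (Icc (-1:ℝ) 1 ∪ Ioi 1) = univ := by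
    ext x
    simp only [mem_union, mem_Iic, mem_Icc, mem_Ioi, mem_univ, iff_true]
    rcases le_or_gt x (-1) with h | h
    · exact Or.inl h
    · rcases le_or_gt x 1 with h2 | h2
      · exact Or.inr (Or.inl ⟨h.le, h2⟩)
      · exact Or.inr (Or.inr h2)
  have hall := hIic.union ((hcont.integrableOn_Icc (a := -1) (b := 1)).union hIoi)
  rw [hunion] at hall
  exact integrableOn_univ.mp hall

lemma ae_ne_zero : ∀ᵐ v : ℝ ∂(volume : Measure ℝ), v ≠ 0 := by
  rw [MeasureTheory.ae_iff]
  simp only [ne_eq, not_not, Set.setOf_eq_eq_singleton]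
  exact Real.volume_singleton

/-- Characteristic function identity. -/
lemma char (hα : 0 < α) (hα1 : α ≤ 1) (t : ℝ) :
    ∫ y : ℝ, Complex.exp (Complex.I * t * y) * ((α / (π * |y|) * Ia α |y| : ℝ) : ℂ)
      = ((max (1 - |t| ^ α) 0 : ℝ) : ℂ) := by
  have hπ : (0:ℝ) < π := Real.pi_pos
  have hinv := (G_int hα).fourierInv_fourier_eq (FG_int hα hα1) ((G_cont hα).continuousAt (x := t))
  rw [Real.fourierInv_eq_fourier_neg,
    Real.fourier_real_eq_integral_exp_smul] at hinv
  -- rewrite the integrand a.e.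
  have hae : (fun v : ℝ => Complex.exp (((-2 * π * v * (-t) : ℝ) : ℂ) * Complex.I) • (𝓕 (G α) v))
      =ᵐ[volume] fun v : ℝ => (2 * π : ℂ) *
        (Complex.exp (Complex.I * (t : ℂ) * ((2 * π * v : ℝ) : ℂ))
          * ((α / (π * |2 * π * v|) * Ia α |2 * π * v| : ℝ) : ℂ)) := by
    filter_upwards [ae_ne_zero] with v hv
    have hv' : (0:ℝ) < |v| := abs_pos.mpr hv
    rw [FG_eq hα hv]
    have habs : |2 * π * v| = 2 * π * |v| := by
      rw [abs_mul, abs_of_nonneg (by positivity : (0:ℝ) ≤ 2 * π)]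
    have hexp : (((-2 * π * v * (-t) : ℝ) : ℂ) * Complex.I)
        = Complex.I * (t : ℂ) * ((2 * π * v : ℝ) : ℂ) := by
      push_cast
      ring
    have hfactor : ((α / (π * |v|) * Ia α (2 * π * |v|) : ℝ) : ℂ)
        = (2 * π : ℂ) * ((α / (π * |2 * π * v|) * Ia α |2 * π * v| : ℝ) : ℂ) := by
      rw [habs]
      rw [show ((2 * π : ℂ)) = ((2 * π : ℝ) : ℂ) by push_cast; ring]
      rw [← Complex.ofReal_mul]
      congr 1
      have : (2 * π : ℝ) * (α / (π * (2 * π * |v|)) * Ia α (2 * π * |v|))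
          = α / (π * |v|) * Ia α (2 * π * |v|) := by
        field_simp
      rw [this]
    rw [smul_eq_mul, hexp, hfactor]
    ring
  rw [integral_congr_ae hae] at hinv
  rw [integral_const_mul] at hinv
  have hcomp : (∫ v : ℝ, (fun u : ℝ => Complex.exp (Complex.I * (t : ℂ) * ((u : ℝ) : ℂ))
        * ((α / (π * |u|) * Ia α |u| : ℝ) : ℂ)) (2 * π * v))
      = |((2 * π : ℝ))⁻¹| • ∫ u : ℝ, Complex.exp (Complex.I * (t : ℂ) * ((u : ℝ) : ℂ))
        * ((α / (π * |u|) * Ia α |u| : ℝ) : ℂ) := by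
    rw [← MeasureTheory.Measure.integral_comp_mul_left
      (fun u : ℝ => Complex.exp (Complex.I * (t : ℂ) * ((u : ℝ) : ℂ))
        * ((α / (π * |u|) * Ia α |u| : ℝ) : ℂ)) (2 * π)]
  simp only [] at hcomp
  rw [hcomp] at hinv
  rw [abs_of_pos (by positivity : (0:ℝ) < (2 * π)⁻¹)] at hinv
  rw [Complex.real_smul] at hinv
  set X : ℂ := ∫ u : ℝ, Complex.exp (Complex.I * (t:ℂ) * ((u:ℝ):ℂ))
      * ((α / (π * |u|) * Ia α |u| : ℝ) : ℂ) with hX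
  have hsimp : 2 * (π:ℂ) * ((((2 * π : ℝ)⁻¹ : ℝ) : ℂ) * X) = X := by
    have hne : (π : ℂ) ≠ 0 := by exact_mod_cast Real.pi_ne_zero
    push_cast
    field_simp
  rw [hsimp] at hinv
  rw [hinv]
  rfl

end KendallAux

open MeasureTheory Set Real

/-- For `0 < α ≤ 1`, the function `f_α(y) = (α/(π|y|)) ∫_0^1 sin(t|y|) t^(α-1) dt` is
nonnegative almost everywhere, integrates to `1`, and the probability measure with
density `f_α` has characteristic function `t ↦ (1 - |t|^α)_+`. -/
theorem kendall_weakly_stable_density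
    (α : ℝ) (hα : 0 < α) (hα1 : α ≤ 1) :
    (∀ᵐ y : ℝ ∂volume,
        0 ≤ α / (π * |y|) * ∫ t in (0:ℝ)..1, Real.sin (t * |y|) * t ^ (α - 1))
    ∧ (∫ y : ℝ,
        α / (π * |y|) * ∫ t in (0:ℝ)..1, Real.sin (t * |y|) * t ^ (α - 1)) = 1
    ∧ (∀ t : ℝ,
        ∫ y : ℝ, Complex.exp (Complex.I * t * y)
            * ((α / (π * |y|) * ∫ s in (0:ℝ)..1, Real.sin (s * |y|) * s ^ (α - 1) : ℝ) : ℂ)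
          = ((max (1 - |t| ^ α) 0 : ℝ) : ℂ)) := by
  have h3 : ∀ t : ℝ,
      ∫ y : ℝ, Complex.exp (Complex.I * t * y)
          * ((α / (π * |y|) * ∫ s in (0:ℝ)..1, Real.sin (s * |y|) * s ^ (α - 1) : ℝ) : ℂ)
        = ((max (1 - |t| ^ α) 0 : ℝ) : ℂ) := by
    intro t
    have h := KendallAux.char hα hα1 t
    simpa only [KendallAux.Ia] using h
  refine ⟨?_, ?_, h3⟩
  · refine Filter.Eventually.of_forall fun y => ?_
    have h1 : 0 ≤ KendallAux.Ia α |y| := KendallAux.Ia_nonneg hα hα1 (abs_nonneg y)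
    rw [show (∫ t in (0:ℝ)..1, Real.sin (t * |y|) * t ^ (α - 1)) = KendallAux.Ia α |y|
      from rfl]
    exact mul_nonneg (div_nonneg hα.le (by positivity)) h1
  · have h0 := h3 0
    simp only [Complex.ofReal_zero, mul_zero, zero_mul, Complex.exp_zero, one_mul,
      abs_zero] at h0
    rw [Real.zero_rpow hα.ne', sub_zero, max_eq_left zero_le_one] at h0
    have hcast : (∫ y : ℝ, ((α / (π * |y|) *
          ∫ s in (0:ℝ)..1, Real.sin (s * |y|) * s ^ (α - 1) : ℝ) : ℂ))
        = ((∫ y : ℝ, α / (π * |y|) *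
          ∫ s in (0:ℝ)..1, Real.sin (s * |y|) * s ^ (α - 1) : ℝ) : ℂ) := integral_ofReal
    rw [hcast] at h0
    exact_mod_cast h0
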